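/- Let (X,d) be a metric space satisfying the ⊠-inequalities. Suppose x,y,z,w ∈ X with z ≠ w and x',y',z',w' ∈ ℝ² satisfy d(y,z) ≤ ‖y'−z'‖, d(z,w) ≤ ‖z'−w'‖, d(w,x) ≤ ‖w'−x'‖, ‖x'−z'‖ ≤ d(x,z), ‖y'−w'‖ ≤ d(y,w), and the segments [x',z'] and [y',w'] intersect. Then ‖x'−y'‖ ≤ d(x,y). -/

import Mathlib

set_option maxHeartbeats 1000000

noncomputable section

/-- A metric space satisfies the ⊠-inequalities. -/
def BoxIneq (X : Type*) [MetricSpace X] : Prop :=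
  ∀ t ∈ Set.Icc (0:ℝ) 1, ∀ s ∈ Set.Icc (0:ℝ) 1, ∀ x y z w : X,
    0 ≤ (1 - t) * (1 - s) * dist x y ^ 2 + t * (1 - s) * dist y z ^ 2
      + t * s * dist z w ^ 2 + (1 - t) * s * dist w x ^ 2
      - t * (1 - t) * dist x z ^ 2 - s * (1 - s) * dist y w ^ 2

private lemma quad_identity {E : Type*} [NormedAddCommGroup E] [InnerProductSpace ℝ E]
    (a b c d : E) (t s : ℝ) :
    ‖((1-t) • a + t • c) - ((1-s) • b + s • d)‖ ^ 2
      = (1-t)*(1-s)*‖a-b‖^2 + t*(1-s)*‖c-b‖^2 + t*s*‖c-d‖^2 + (1-t)*s*‖a-d‖^2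
        - t*(1-t)*‖a-c‖^2 - s*(1-s)*‖b-d‖^2 := by
  have h : ∀ v : E, ‖v‖^2 = inner ℝ v v := fun v => (real_inner_self_eq_norm_sq v).symm
  simp only [h]
  simp only [inner_sub_left, inner_sub_right, inner_add_left, inner_add_right,
    inner_smul_left, inner_smul_right, RCLike.conj_to_real, conj_trivial,
    real_inner_comm b a, real_inner_comm c a, real_inner_comm d a,
    real_inner_comm c b, real_inner_comm d b, real_inner_comm d c]
  ring

private lemma aux_eps (c A M : ℝ) (hA : 0 < A) (hM : 0 ≤ M)
    (h : ∀ ε : ℝ, 0 < ε → ε < 1 → A * c ≤ ε * M) : c ≤ 0 := by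
  by_contra hc
  push_neg at hc
  have hAc : 0 < A * c := mul_pos hA hc
  set ε : ℝ := min (1/2) (A * c / (2 * M + 1)) with hε
  have hε1 : 0 < ε := lt_min (by norm_num) (div_pos hAc (by linarith))
  have hε2 : ε < 1 := lt_of_le_of_lt (min_le_left _ _) (by norm_num)
  have hε3 : ε * (2 * M + 1) ≤ A * c := by
    have := min_le_right (1/2) (A * c / (2 * M + 1))
    rw [← hε] at this
    calc ε * (2 * M + 1) ≤ (A * c / (2 * M + 1)) * (2 * M + 1) := by
          apply mul_le_mul_of_nonneg_right this (by linarith)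
      _ = A * c := by field_simp
  have := h ε hε1 hε2
  nlinarith [mul_pos hε1 (show (0:ℝ) < M + 1 by linarith)]

theorem boxIneq_quadrangle_edge {X : Type*} [MetricSpace X] (hX : BoxIneq X)
    (x y z w : X) (hzw : z ≠ w) (x' y' z' w' : EuclideanSpace ℝ (Fin 2))
    (h1 : dist y z ≤ dist y' z') (h2 : dist z w ≤ dist z' w')
    (h3 : dist w x ≤ dist w' x')
    (h4 : dist x' z' ≤ dist x z) (h5 : dist y' w' ≤ dist y w)
    (h6 : (segment ℝ x' z' ∩ segment ℝ y' w').Nonempty) :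
    dist x' y' ≤ dist x y := by
  obtain ⟨p, hpx, hpy⟩ := h6
  obtain ⟨a1, t0, ha1, ht0, hat, hpt⟩ := hpx
  obtain ⟨b1, s0, hb1, hs0, hbs, hps⟩ := hpy
  have ht0' : t0 ≤ 1 := by linarith
  have hs0' : s0 ≤ 1 := by linarith
  have hpt' : (1 - t0) • x' + t0 • z' = p := by
    rw [← hpt, show a1 = 1 - t0 by linarith]
  have hps' : (1 - s0) • y' + s0 • w' = p := by
    rw [← hps, show b1 = 1 - s0 by linarith]
  -- squared comparisons in norm form
  have hzw' : 0 < dist z w := dist_pos.mpr hzw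
  have n1 : dist y z ^ 2 ≤ ‖z' - y'‖ ^ 2 := by
    rw [← dist_eq_norm, dist_comm z' y']
    exact pow_le_pow_left₀ dist_nonneg h1 2
  have n2 : dist z w ^ 2 ≤ ‖z' - w'‖ ^ 2 := by
    rw [← dist_eq_norm]
    exact pow_le_pow_left₀ dist_nonneg h2 2
  have n3 : dist w x ^ 2 ≤ ‖x' - w'‖ ^ 2 := by
    rw [← dist_eq_norm, dist_comm x' w']
    exact pow_le_pow_left₀ dist_nonneg h3 2
  have n4 : ‖x' - z'‖ ^ 2 ≤ dist x z ^ 2 := by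
    rw [← dist_eq_norm]
    exact pow_le_pow_left₀ dist_nonneg h4 2
  have n5 : ‖y' - w'‖ ^ 2 ≤ dist y w ^ 2 := by
    rw [← dist_eq_norm]
    exact pow_le_pow_left₀ dist_nonneg h5 2
  -- key inequality
  have K : ∀ t ∈ Set.Icc (0:ℝ) 1, ∀ s ∈ Set.Icc (0:ℝ) 1,
      (1-t)*(1-s)*(‖x' - y'‖^2 - dist x y ^ 2)
        ≤ ‖((1-t) • x' + t • z') - ((1-s) • y' + s • w')‖ ^ 2 := by
    intro t ht s hs
    have hbox := hX t ht s hs x y z w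
    have hid := quad_identity x' y' z' w' t s
    obtain ⟨ht1, ht2⟩ := ht
    obtain ⟨hs1, hs2⟩ := hs
    nlinarith [mul_nonneg (mul_nonneg ht1 (by linarith : (0:ℝ) ≤ 1 - s)) (sub_nonneg.mpr n1),
      mul_nonneg (mul_nonneg ht1 hs1) (sub_nonneg.mpr n2),
      mul_nonneg (mul_nonneg (by linarith : (0:ℝ) ≤ 1 - t) hs1) (sub_nonneg.mpr n3),
      mul_nonneg (mul_nonneg ht1 (by linarith : (0:ℝ) ≤ 1 - t)) (sub_nonneg.mpr n4),
      mul_nonneg (mul_nonneg hs1 (by linarith : (0:ℝ) ≤ 1 - s)) (sub_nonneg.mpr n5)]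
  set c : ℝ := ‖x' - y'‖^2 - dist x y ^ 2 with hcdef
  -- not both t0 = 1 and s0 = 1
  have hnot : ¬ (t0 = 1 ∧ s0 = 1) := by
    rintro ⟨rfl, rfl⟩
    have hz : z' = p := by rw [← hpt']; simp
    have hw : w' = p := by rw [← hps']; simp
    have : dist z' w' = 0 := by rw [hz, hw, dist_self]
    linarith
  have hc : c ≤ 0 := by
    rcases eq_or_lt_of_le ht0' with ht0e | ht0lt
    · -- t0 = 1, so s0 < 1 and p = z'
      have hs0lt : s0 < 1 := lt_of_le_of_ne hs0' (fun h => hnot ⟨ht0e, h⟩)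
      have hz : z' = p := by rw [← hpt', ht0e]; simp
      apply aux_eps c (1 - s0) (‖x' - z'‖^2) (by linarith) (sq_nonneg _)
      intro ε hε1 hε2
      have hK := K (1-ε) ⟨by linarith, by linarith⟩ s0 ⟨hs0, hs0'⟩
      have hnorm : ((1-(1-ε)) • x' + (1-ε) • z') - ((1-s0) • y' + s0 • w')
          = ε • (x' - z') := by
        rw [hps', ← hz]; module
      rw [hnorm, norm_smul, Real.norm_eq_abs, abs_of_pos hε1, mul_pow] at hK
      have h2' : ε * ((1 - s0) * c) ≤ ε * (ε * ‖x' - z'‖^2) := by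
        ring_nf at hK ⊢; linarith
      have := le_of_mul_le_mul_left h2' hε1
      nlinarith [sq_nonneg ‖x' - z'‖]
    · rcases eq_or_lt_of_le hs0' with hs0e | hs0lt
      · -- s0 = 1, t0 < 1, p = w'
        have hw : w' = p := by rw [← hps', hs0e]; simp
        apply aux_eps c (1 - t0) (‖w' - y'‖^2) (by linarith) (sq_nonneg _)
        intro ε hε1 hε2
        have hK := K t0 ⟨ht0, ht0'⟩ (1-ε) ⟨by linarith, by linarith⟩
        have hnorm : ((1-t0) • x' + t0 • z') - ((1-(1-ε)) • y' + (1-ε) • w')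
            = ε • (w' - y') := by
          rw [hpt', ← hw]; module
        rw [hnorm, norm_smul, Real.norm_eq_abs, abs_of_pos hε1, mul_pow] at hK
        have h2' : ε * ((1 - t0) * c) ≤ ε * (ε * ‖w' - y'‖^2) := by
          ring_nf at hK ⊢; linarith
        have := le_of_mul_le_mul_left h2' hε1
        nlinarith [sq_nonneg ‖w' - y'‖]
      · -- both < 1
        have hK := K t0 ⟨ht0, ht0'⟩ s0 ⟨hs0, hs0'⟩
        rw [hpt', hps', sub_self, norm_zero] at hK
        nlinarith [mul_pos (by linarith : (0:ℝ) < 1 - t0) (by linarith : (0:ℝ) < 1 - s0)]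
  have hxy' : ‖x' - y'‖ ^ 2 ≤ dist x y ^ 2 := by linarith
  rw [dist_eq_norm]
  nlinarith [norm_nonneg (x' - y'), dist_nonneg (x := x) (y := y)]
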